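/- The function h(θ) = −(1/2)(3cos²θ − 1)·log(cot(θ/2)) + (3/2)cosθ satisfies (Δ + 6)h = 0 on the 2-sphere minus the poles {θ = 0, π}, where Δh = (1/sinθ)∂_θ(sinθ ∂_θ h). -/

import Mathlib

open Real

noncomputable def Lfun (v : ℝ) : ℝ := Real.log (Real.cos (v / 2) / Real.sin (v / 2))

lemma sin_half_pos {u : ℝ} (h1 : 0 < u) (h2 : u < Real.pi) : 0 < Real.sin (u / 2) :=
  Real.sin_pos_of_pos_of_lt_pi (by linarith) (by linarith [Real.pi_pos])

lemma cos_half_pos {u : ℝ} (h1 : 0 < u) (h2 : u < Real.pi) : 0 < Real.cos (u / 2) :=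
  Real.cos_pos_of_mem_Ioo ⟨by linarith [Real.pi_pos], by linarith⟩

lemma hasDerivAt_L {u : ℝ} (h1 : 0 < u) (h2 : u < Real.pi) :
    HasDerivAt Lfun (-(1 / Real.sin u)) u := by
  have hs := sin_half_pos h1 h2
  have hc := cos_half_pos h1 h2
  have hhalf : HasDerivAt (fun v : ℝ => v / 2) (1 / 2) u := by
    simpa using (hasDerivAt_id u).div_const 2
  have hcos : HasDerivAt (fun v : ℝ => Real.cos (v / 2)) (-Real.sin (u / 2) * (1 / 2)) u :=
    HasDerivAt.comp (h₂ := Real.cos) u (Real.hasDerivAt_cos (u / 2)) hhalf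
  have hsin : HasDerivAt (fun v : ℝ => Real.sin (v / 2)) (Real.cos (u / 2) * (1 / 2)) u :=
    HasDerivAt.comp (h₂ := Real.sin) u (Real.hasDerivAt_sin (u / 2)) hhalf
  have hq : HasDerivAt (fun v : ℝ => Real.cos (v / 2) / Real.sin (v / 2))
      ((-Real.sin (u / 2) * (1 / 2) * Real.sin (u / 2) -
        Real.cos (u / 2) * (Real.cos (u / 2) * (1 / 2))) / Real.sin (u / 2) ^ 2) u :=
    hcos.div hsin hs.ne'
  have hqne : Real.cos (u / 2) / Real.sin (u / 2) ≠ 0 := by positivity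
  have := (Real.hasDerivAt_log hqne).comp u hq
  have hsinu : Real.sin u = 2 * Real.sin (u / 2) * Real.cos (u / 2) := by
    rw [← Real.sin_two_mul]; ring_nf
  refine this.congr_deriv ?_
  have h1 : Real.sin (u / 2) * Real.sin (u / 2) + Real.cos (u / 2) * Real.cos (u / 2) = 1 := by
    nlinarith [Real.sin_sq_add_cos_sq (u / 2)]
  rw [hsinu]
  field_simp
  linear_combination (-1 : ℝ) * h1

lemma hasDerivAt_h {u : ℝ} (h1 : 0 < u) (h2 : u < Real.pi) :
    HasDerivAt (fun v : ℝ => -(1 / 2) * (3 * Real.cos v ^ 2 - 1) * Lfun v + (3 / 2) * Real.cos v)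
      (3 * Real.cos u * Real.sin u * Lfun u + (1 / 2) * (3 * Real.cos u ^ 2 - 1) / Real.sin u
        - (3 / 2) * Real.sin u) u := by
  have hL := hasDerivAt_L h1 h2
  have hcos := Real.hasDerivAt_cos u
  have hsne : Real.sin u ≠ 0 := (Real.sin_pos_of_pos_of_lt_pi h1 h2).ne'
  have hpoly : HasDerivAt (fun v : ℝ => -(1 / 2) * (3 * Real.cos v ^ 2 - 1))
      (3 * Real.cos u * Real.sin u) u := by
    have hsq := hcos.pow 2
    have := ((hsq.const_mul (3 : ℝ)).sub_const 1).const_mul (-(1 / 2) : ℝ)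
    refine this.congr_deriv ?_
    push_cast
    ring
  have := (hpoly.mul hL).add (hcos.const_mul (3 / 2 : ℝ))
  refine this.congr_deriv ?_
  field_simp
  ring

lemma hasDerivAt_G {u : ℝ} (h1 : 0 < u) (h2 : u < Real.pi) :
    HasDerivAt (fun v : ℝ => 3 * Real.cos v * Real.sin v ^ 2 * Lfun v
        + (1 / 2) * (3 * Real.cos v ^ 2 - 1) - (3 / 2) * Real.sin v ^ 2)
      ((6 * Real.cos u ^ 2 * Real.sin u - 3 * Real.sin u ^ 3) * Lfun u
        - 9 * Real.cos u * Real.sin u) u := by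
  have hL := hasDerivAt_L h1 h2
  have hcos := Real.hasDerivAt_cos u
  have hsin := Real.hasDerivAt_sin u
  have hsne : Real.sin u ≠ 0 := (Real.sin_pos_of_pos_of_lt_pi h1 h2).ne'
  have hs2 : HasDerivAt (fun v : ℝ => Real.sin v ^ 2) (2 * Real.sin u * Real.cos u) u := by
    simpa using hsin.fun_pow 2
  have hA : HasDerivAt (fun v : ℝ => 3 * Real.cos v * Real.sin v ^ 2)
      (3 * (-Real.sin u) * Real.sin u ^ 2 + 3 * Real.cos u * (2 * Real.sin u * Real.cos u)) u := by
    simpa using (hcos.const_mul (3:ℝ)).fun_mul hs2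
  have hc2 : HasDerivAt (fun v : ℝ => (1 / 2) * (3 * Real.cos v ^ 2 - 1))
      ((1 / 2) * (3 * (2 * Real.cos u * (-Real.sin u)))) u := by
    have : HasDerivAt (fun v : ℝ => Real.cos v ^ 2) (2 * Real.cos u * (-Real.sin u)) u := by
      simpa using hcos.fun_pow 2
    simpa using ((this.const_mul 3).sub_const 1).const_mul (1 / 2 : ℝ)
  have := ((hA.mul hL).add hc2).sub (hs2.const_mul (3 / 2 : ℝ))
  refine this.congr_deriv ?_
  field_simp
  ring

/-- The singular axially symmetric function
`h(θ) = −(1/2)(3cos²θ − 1) log(cot(θ/2)) + (3/2)cosθ` satisfies `(Δ + 6) h = 0` away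
from the poles, where `Δh = (1/sinθ) (sinθ h')'`. -/
theorem singular_mode_K_six :
    ∀ θ ∈ Set.Ioo (0 : ℝ) Real.pi,
      (1 / Real.sin θ) * deriv (fun t : ℝ => Real.sin t *
          deriv (fun u : ℝ => -(1 / 2) * (3 * Real.cos u ^ 2 - 1) *
            Real.log (Real.cos (u / 2) / Real.sin (u / 2)) + (3 / 2) * Real.cos u) t) θ
        + 6 * (-(1 / 2) * (3 * Real.cos θ ^ 2 - 1) *
            Real.log (Real.cos (θ / 2) / Real.sin (θ / 2)) + (3 / 2) * Real.cos θ) = 0 := by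
  intro θ hθ
  obtain ⟨h1, h2⟩ := hθ
  have hsθ : Real.sin θ ≠ 0 := (Real.sin_pos_of_pos_of_lt_pi h1 h2).ne'
  -- the inner function written with Lfun
  have hEq : (fun t : ℝ => Real.sin t *
      deriv (fun u : ℝ => -(1 / 2) * (3 * Real.cos u ^ 2 - 1) *
        Real.log (Real.cos (u / 2) / Real.sin (u / 2)) + (3 / 2) * Real.cos u) t)
      =ᶠ[nhds θ] (fun t : ℝ => 3 * Real.cos t * Real.sin t ^ 2 * Lfun t
        + (1 / 2) * (3 * Real.cos t ^ 2 - 1) - (3 / 2) * Real.sin t ^ 2) := by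
    filter_upwards [isOpen_Ioo.mem_nhds (⟨h1, h2⟩ : θ ∈ Set.Ioo 0 Real.pi)] with t ht
    obtain ⟨t1, t2⟩ := ht
    have hst : Real.sin t ≠ 0 := (Real.sin_pos_of_pos_of_lt_pi t1 t2).ne'
    have := (hasDerivAt_h t1 t2).deriv
    show Real.sin t * deriv (fun u : ℝ => -(1 / 2) * (3 * Real.cos u ^ 2 - 1) * Lfun u
        + (3 / 2) * Real.cos u) t = _
    rw [this]
    field_simp
  rw [hEq.deriv_eq, (hasDerivAt_G h1 h2).deriv]
  have hpyth : Real.sin θ ^ 2 = 1 - Real.cos θ ^ 2 := by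
    nlinarith [Real.sin_sq_add_cos_sq θ]
  show (1 / Real.sin θ) * ((6 * Real.cos θ ^ 2 * Real.sin θ - 3 * Real.sin θ ^ 3) * Lfun θ
        - 9 * Real.cos θ * Real.sin θ)
      + 6 * (-(1 / 2) * (3 * Real.cos θ ^ 2 - 1) * Lfun θ + (3 / 2) * Real.cos θ) = 0
  field_simp
  linear_combination (-6 * Lfun θ) * hpyth
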